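/- arXiv:2508.05303 — 3 statements merged into one kernel-verified Lean document; each statement's English description precedes it below -/
import Mathlib

section
/- Let δ be an N-dimensional Gaussian random vector with mean μ and strictly positive definite covariance Σ, and let M be a symmetric strictly positive definite N×N matrix and Δρ ∈ ℝ^N. Then E[exp(-(1/2)‖δ - Δρ‖²_{M⁻¹})] = sqrt(det S / det Σ) · exp(-C), where S⁻¹ = M⁻¹ + Σ⁻¹, α = S(M⁻¹Δρ + Σ⁻¹μ), and 2C = ‖Δρ‖²_{M⁻¹} + ‖μ‖²_{Σ⁻¹} - ‖α‖²_{S⁻¹}. In particular this expectation is finite. -/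
open MeasureTheory Real Matrix

/-- Quadratic form `xᵀ Q x` induced by a matrix `Q`. -/
def quadForm {N : ℕ} (Q : Matrix (Fin N) (Fin N) ℝ) (x : Fin N → ℝ) : ℝ :=
  x ⬝ᵥ Q.mulVec x

/-- Density of the multivariate Gaussian `N(μ, Cov)` on `ℝ^N`. -/
noncomputable def gaussDensity {N : ℕ} (μ : Fin N → ℝ) (Cov : Matrix (Fin N) (Fin N) ℝ)
    (x : Fin N → ℝ) : ℝ :=
  (Real.sqrt ((2 * π) ^ N * Cov.det))⁻¹ * Real.exp (-(quadForm Cov⁻¹ (x - μ)) / 2)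

/- Auxiliary lemmas -/

lemma herm_symm {N : ℕ} {Q : Matrix (Fin N) (Fin N) ℝ} (h : Q.IsHermitian) : Qᵀ = Q := by
  simpa [Matrix.IsHermitian, Matrix.conjTranspose_eq_transpose_of_trivial] using h

lemma sqrt_pow'' (a : ℝ) (ha : 0 ≤ a) (n : ℕ) : Real.sqrt (a ^ n) = Real.sqrt a ^ n := by
  induction n with
  | zero => simp
  | succ n ih => rw [pow_succ, pow_succ, Real.sqrt_mul (pow_nonneg ha n), ih]

lemma std_int (N : ℕ) :
    Integrable (fun x : Fin N → ℝ => Real.exp (-(∑ i, x i ^ 2) / 2)) ∧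
    ∫ x : Fin N → ℝ, Real.exp (-(∑ i, x i ^ 2) / 2) = Real.sqrt (2 * π) ^ N := by
  have h : ∀ x : Fin N → ℝ, Real.exp (-(∑ i, x i ^ 2) / 2)
      = ∏ i, Real.exp (-(1/2 : ℝ) * x i ^ 2) := by
    intro x
    rw [← Real.exp_sum]
    congr 1
    rw [neg_div, Finset.sum_div, ← Finset.sum_neg_distrib]
    exact Finset.sum_congr rfl fun i _ => by ring
  have h1 : Integrable (fun y : ℝ => Real.exp (-(1/2 : ℝ) * y ^ 2)) :=
    integrable_exp_neg_mul_sq (by norm_num)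
  constructor
  · simp_rw [h]
    exact Integrable.fintype_prod (𝕜 := ℝ) (fun i => h1)
  · simp_rw [h]
    rw [volume_pi, integral_fintype_prod_eq_pow (𝕜 := ℝ) (ι := Fin N) (fun y => Real.exp (-(1/2:ℝ) * y^2))]
    rw [integral_gaussian]
    norm_num [mul_comm]

lemma posdef_int {N : ℕ} {A : Matrix (Fin N) (Fin N) ℝ} (hA : A.PosDef) :
    Integrable (fun x : Fin N → ℝ => Real.exp (-(quadForm A x) / 2)) ∧
    ∫ x : Fin N → ℝ, Real.exp (-(quadForm A x) / 2)
      = Real.sqrt (2 * π) ^ N / Real.sqrt A.det := by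
  obtain ⟨B, hsq, hBB⟩ : ∃ B : Matrix (Fin N) (Fin N) ℝ, B.PosSemidef ∧ B * B = A := by
    open scoped MatrixOrder in
    exact ⟨CFC.sqrt A, (CFC.sqrt_nonneg A).posSemidef, CFC.sqrt_mul_sqrt_self A hA.posSemidef.nonneg⟩
  have hBsym : Bᵀ = B := herm_symm hsq.isHermitian
  have hdetB_nonneg : 0 ≤ B.det := by
    rw [hsq.isHermitian.det_eq_prod_eigenvalues]
    exact Finset.prod_nonneg fun i _ => hsq.eigenvalues_nonneg i
  have hdet2 : B.det * B.det = A.det := by rw [← Matrix.det_mul, hBB]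
  have hdetA : 0 < A.det := hA.det_pos
  have hdetB_pos : 0 < B.det := by
    rcases hdetB_nonneg.lt_or_eq with h | h
    · exact h
    · exfalso; rw [← h] at hdet2; simp at hdet2; linarith
  have hdetB : B.det = Real.sqrt A.det := by
    rw [← hdet2, Real.sqrt_mul_self hdetB_nonneg]
  have hquad : ∀ x : Fin N → ℝ, quadForm A x = ∑ i, (B.mulVec x) i ^ 2 := by
    intro x
    have : quadForm A x = (B.mulVec x) ⬝ᵥ (B.mulVec x) := by
      rw [quadForm, ← hBB, ← Matrix.mulVec_mulVec, Matrix.dotProduct_mulVec,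
        ← Matrix.mulVec_transpose, hBsym]
    rw [this]
    simp [dotProduct, sq]
  set L : (Fin N → ℝ) →ₗ[ℝ] (Fin N → ℝ) := Matrix.toLin' B with hL
  have hdetL : LinearMap.det L = B.det := LinearMap.det_toLin' B
  have hdetL_ne : LinearMap.det L ≠ 0 := by rw [hdetL]; exact hdetB_pos.ne'
  have hmap : Measure.map L volume
      = ENNReal.ofReal |(LinearMap.det L)⁻¹| • volume :=
    Measure.map_linearMap_addHaar_eq_smul_addHaar volume hdetL_ne
  have hLcont : Continuous L := L.continuous_of_finiteDimensional
  set f : (Fin N → ℝ) → ℝ := fun y => Real.exp (-(∑ i, y i ^ 2) / 2) with hf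
  have hfm : Measurable f := by
    apply Measurable.exp
    exact (Finset.measurable_sum _ (fun i _ => (measurable_pi_apply i).pow_const 2)).neg.div_const 2
  have hfint : Integrable f := (std_int N).1
  have hcomp : ∀ x, Real.exp (-(quadForm A x) / 2) = f (L x) := by
    intro x
    rw [hf, hquad x]
    simp [hL, Matrix.toLin'_apply]
  have hint_map : Integrable f (Measure.map L volume) := by
    rw [hmap]
    exact hfint.smul_measure ENNReal.ofReal_ne_top
  constructor
  · simp_rw [hcomp]
    exact (integrable_map_measure hfm.aestronglyMeasurable hLcont.aemeasurable).mp hint_map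
  · simp_rw [hcomp]
    rw [← integral_map hLcont.aemeasurable hfm.aestronglyMeasurable, hmap,
      integral_smul_measure, (std_int N).2]
    rw [hdetL, abs_of_pos (inv_pos.mpr hdetB_pos), ENNReal.toReal_ofReal (by positivity)]
    rw [hdetB]
    rw [smul_eq_mul, inv_mul_eq_div]

lemma dot_symm {N : ℕ} {Q : Matrix (Fin N) (Fin N) ℝ} (hQ : Qᵀ = Q) (v w : Fin N → ℝ) :
    v ⬝ᵥ Q.mulVec w = w ⬝ᵥ Q.mulVec v := by
  rw [Matrix.dotProduct_mulVec, ← Matrix.mulVec_transpose, hQ, dotProduct_comm]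

lemma quad_sub {N : ℕ} {Q : Matrix (Fin N) (Fin N) ℝ} (hQ : Qᵀ = Q) (x y : Fin N → ℝ) :
    quadForm Q (x - y) = quadForm Q x - 2 * (x ⬝ᵥ Q.mulVec y) + quadForm Q y := by
  have h := dot_symm hQ y x
  simp only [quadForm, sub_eq_add_neg, Matrix.mulVec_add, Matrix.mulVec_neg,
    dotProduct_add, add_dotProduct, dotProduct_neg, neg_dotProduct, neg_neg] at *
  linarith

lemma complete_square {N : ℕ} {A B : Matrix (Fin N) (Fin N) ℝ}
    (hA : Aᵀ = A) (hB : Bᵀ = B) (Δρ μ α x : Fin N → ℝ)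
    (hα : (A + B).mulVec α = A.mulVec Δρ + B.mulVec μ) :
    quadForm A (x - Δρ) + quadForm B (x - μ)
      = quadForm (A + B) (x - α)
        + (quadForm A Δρ + quadForm B μ - quadForm (A + B) α) := by
  have hAB : (A + B)ᵀ = A + B := by rw [Matrix.transpose_add, hA, hB]
  rw [quad_sub hA, quad_sub hB, quad_sub hAB]
  have h1 : x ⬝ᵥ (A + B).mulVec α = x ⬝ᵥ A.mulVec Δρ + x ⬝ᵥ B.mulVec μ := by
    rw [hα, dotProduct_add]
  have h2 : ∀ z : Fin N → ℝ, quadForm (A + B) z = quadForm A z + quadForm B z := by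
    intro z; simp [quadForm, Matrix.add_mulVec, dotProduct_add]
  rw [h2 x]; linarith [h1]

theorem stmt0 (N : ℕ) (μ Δρ : Fin N → ℝ) (Cov M : Matrix (Fin N) (Fin N) ℝ)
    (hCov : Cov.PosDef) (hM : M.PosDef) :
    ∀ S : Matrix (Fin N) (Fin N) ℝ, S = (M⁻¹ + Cov⁻¹)⁻¹ →
    ∀ α : Fin N → ℝ, α = S.mulVec (M⁻¹.mulVec Δρ + Cov⁻¹.mulVec μ) →
    ∀ C : ℝ, C = (quadForm M⁻¹ Δρ + quadForm Cov⁻¹ μ - quadForm S⁻¹ α) / 2 →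
    Integrable
      (fun x : Fin N → ℝ => Real.exp (-(quadForm M⁻¹ (x - Δρ)) / 2) * gaussDensity μ Cov x) ∧
    ∫ x : Fin N → ℝ, Real.exp (-(quadForm M⁻¹ (x - Δρ)) / 2) * gaussDensity μ Cov x
      = Real.sqrt (S.det / Cov.det) * Real.exp (-C) := by
  intro S hS α hα C hC
  have hA : (M⁻¹).PosDef := hM.inv
  have hB : (Cov⁻¹).PosDef := hCov.inv
  have hABpd : (M⁻¹ + Cov⁻¹).PosDef := hA.add hB
  have hABunit : IsUnit (M⁻¹ + Cov⁻¹).det := hABpd.det_pos.ne'.isUnit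
  have hSinv : S⁻¹ = M⁻¹ + Cov⁻¹ := by
    rw [hS, Matrix.nonsing_inv_nonsing_inv _ hABunit]
  have hαeq : (M⁻¹ + Cov⁻¹).mulVec α = M⁻¹.mulVec Δρ + Cov⁻¹.mulVec μ := by
    rw [hα, hS, Matrix.mulVec_mulVec, Matrix.mul_nonsing_inv _ hABunit, Matrix.one_mulVec]
  have h2C : quadForm M⁻¹ Δρ + quadForm Cov⁻¹ μ - quadForm (M⁻¹ + Cov⁻¹) α = 2 * C := by
    rw [← hSinv, hC]; ring
  have key : ∀ x : Fin N → ℝ,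
      Real.exp (-(quadForm M⁻¹ (x - Δρ)) / 2) * gaussDensity μ Cov x
        = ((Real.sqrt ((2 * π) ^ N * Cov.det))⁻¹ * Real.exp (-C))
            * Real.exp (-(quadForm (M⁻¹ + Cov⁻¹) (x - α)) / 2) := by
    intro x
    have hsum := complete_square (herm_symm hA.isHermitian) (herm_symm hB.isHermitian)
      Δρ μ α x hαeq
    have e1 : Real.exp (-(quadForm M⁻¹ (x - Δρ)) / 2)
        * Real.exp (-(quadForm Cov⁻¹ (x - μ)) / 2)
        = Real.exp (-C) * Real.exp (-(quadForm (M⁻¹ + Cov⁻¹) (x - α)) / 2) := by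
      rw [← Real.exp_add, ← Real.exp_add]
      congr 1
      have := h2C
      linarith
    rw [gaussDensity]
    calc Real.exp (-(quadForm M⁻¹ (x - Δρ)) / 2)
          * ((Real.sqrt ((2 * π) ^ N * Cov.det))⁻¹
              * Real.exp (-(quadForm Cov⁻¹ (x - μ)) / 2))
        = (Real.sqrt ((2 * π) ^ N * Cov.det))⁻¹
            * (Real.exp (-(quadForm M⁻¹ (x - Δρ)) / 2)
                * Real.exp (-(quadForm Cov⁻¹ (x - μ)) / 2)) := by ring
      _ = _ := by rw [e1]; ring
  have hint := posdef_int hABpd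
  have hint1 : Integrable
      (fun x : Fin N → ℝ => Real.exp (-(quadForm (M⁻¹ + Cov⁻¹) (x - α)) / 2)) :=
    hint.1.comp_sub_right α
  constructor
  · simp_rw [key]
    exact hint1.const_mul _
  · simp_rw [key]
    rw [MeasureTheory.integral_const_mul]
    rw [integral_sub_right_eq_self
      (fun x : Fin N → ℝ => Real.exp (-(quadForm (M⁻¹ + Cov⁻¹) x) / 2)) α]
    rw [hint.2]
    -- numeric bookkeeping
    have hSpd : S.PosDef := hS ▸ hABpd.inv
    have hSdet : 0 < S.det := hSpd.det_pos
    have hCovdet : 0 < Cov.det := hCov.det_pos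
    have hdetAB : (M⁻¹ + Cov⁻¹).det = S.det⁻¹ := by
      rw [← hSinv, Matrix.det_nonsing_inv, Ring.inverse_eq_inv]
    rw [hdetAB, Real.sqrt_inv, Real.sqrt_mul (by positivity : (0:ℝ) ≤ (2*π)^N),
      sqrt_pow'' _ (by positivity), Real.sqrt_div hSdet.le]
    have h1 : 0 < Real.sqrt (2 * π) ^ N := by positivity
    have h2 : 0 < Real.sqrt Cov.det := Real.sqrt_pos.mpr hCovdet
    have h3 : 0 < Real.sqrt S.det := Real.sqrt_pos.mpr hSdet
    field_simp
end

section
/- Let δ₁ ~ N(μ₁, Σ₁) and δ₂ ~ N(μ₂, Σ₂) be independent Gaussian vectors in ℝ^N, Σ_η symmetric strictly positive definite with Σ_η - Σ₂ strictly positive definite, and Δρ₁, Δρ₂ ∈ ℝ^N. Then with R = exp((‖Δρ₂ - δ₂‖²_{Σ_η⁻¹} - ‖Δρ₁ - δ₁‖²_{Σ_η⁻¹})/2), one has E[R] = sqrt(det S₁ det S₂ /(det Σ₁ det Σ₂)) exp(-C₁ - C₂), where S₁⁻¹ = Σ_η⁻¹ + Σ₁⁻¹, S₂⁻¹ = Σ₂⁻¹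 - Σ_η⁻¹, 2C₁ = ‖Δρ₁‖²_{Σ_η⁻¹} + ‖μ₁‖²_{Σ₁⁻¹} - ‖α₁‖²_{S₁⁻¹} with α₁ = S₁(Σ_η⁻¹Δρ₁ + Σ₁⁻¹μ₁), and 2C₂ = ‖μ₂‖²_{Σ₂⁻¹} - ‖Δρ₂‖²_{Σ_η⁻¹} - ‖α₂‖²_{S₂⁻¹} with α₂ = S₂(Σ₂⁻¹μ₂ - Σ_η⁻¹Δρ₂). -/
open MeasureTheory Real Matrix

lemma gauss_std (N : ℕ) :
    ∫ y : Fin N → ℝ, Real.exp (-(y ⬝ᵥ y) / 2) = Real.sqrt (2 * π) ^ N := by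
  have : ∀ y : Fin N → ℝ, Real.exp (-(y ⬝ᵥ y) / 2) = ∏ i, Real.exp (-(1/2) * (y i) ^ 2) := by
    intro y
    rw [← Real.exp_sum]
    congr 1
    simp only [dotProduct, neg_div, ← Finset.sum_div, ← Finset.sum_neg_distrib]
    rw [Finset.sum_div]
    exact Finset.sum_congr rfl fun i _ => by ring
  simp_rw [this]
  rw [MeasureTheory.integral_fintype_prod_volume_eq_pow (ι := Fin N) (fun t => Real.exp (-(1/2) * t^2))]
  rw [integral_gaussian]
  rw [Fintype.card_fin]
  congr 1
  rw [show π / (1/2 : ℝ) = 2 * π by ring]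

lemma gauss_posdef {N : ℕ} {M : Matrix (Fin N) (Fin N) ℝ} (hM : M.PosDef) :
    ∫ x : Fin N → ℝ, Real.exp (-(quadForm M x) / 2) = Real.sqrt ((2 * π) ^ N / M.det) := by
  open scoped MatrixOrder in set R := CFC.sqrt M with hR
  have hRR : R * R = M := by
    open scoped MatrixOrder in have := CFC.sq_sqrt M hM.posSemidef.nonneg
    rwa [pow_two] at this
  have hRsym : Rᵀ = R := by
    open scoped MatrixOrder in have := (CFC.sqrt_nonneg M).posSemidef.1
    rwa [Matrix.IsHermitian, conjTranspose_eq_transpose_of_trivial] at this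
  have hdet2 : R.det * R.det = M.det := by rw [← det_mul, hRR]
  have hMdet : (0:ℝ) < M.det := hM.det_pos
  have hRdet : R.det ≠ 0 := by
    intro h; rw [h, mul_zero] at hdet2; exact hMdet.ne' hdet2.symm
  have habs : Real.sqrt M.det = |R.det| := by
    rw [← hdet2, Real.sqrt_mul_self_eq_abs]
  have hq : ∀ x, quadForm M x = (R *ᵥ x) ⬝ᵥ (R *ᵥ x) := by
    intro x
    rw [quadForm, ← hRR, ← mulVec_mulVec, dotProduct_mulVec]
    congr 1
    conv_lhs => rw [← hRsym]
    rw [vecMul_transpose]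
  have hg : Continuous fun y : Fin N → ℝ => Real.exp (-(y ⬝ᵥ y) / 2) := by
    apply Real.continuous_exp.comp
    apply Continuous.div_const
    apply Continuous.neg
    exact continuous_finset_sum _ fun i _ => (continuous_apply i).mul (continuous_apply i)
  have hmap := Real.map_matrix_volume_pi_eq_smul_volume_pi hRdet
  have hlin : AEMeasurable (⇑(Matrix.toLin' R)) (volume : Measure (Fin N → ℝ)) :=
    (LinearMap.continuous_of_finiteDimensional _).measurable.aemeasurable
  have key : ∫ x : Fin N → ℝ, Real.exp (-((R *ᵥ x) ⬝ᵥ (R *ᵥ x)) / 2)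
      = |R.det⁻¹| * Real.sqrt (2 * π) ^ N := by
    have := MeasureTheory.integral_map hlin (f := fun y : Fin N → ℝ => Real.exp (-(y ⬝ᵥ y) / 2))
      (hg.aestronglyMeasurable)
    simp_rw [Matrix.toLin'_apply] at this
    rw [← this, hmap, MeasureTheory.integral_smul_measure, gauss_std,
      ENNReal.toReal_ofReal (abs_nonneg _), smul_eq_mul]
  simp_rw [hq]
  rw [key, Real.sqrt_div (by positivity), habs, abs_inv]
  rw [show Real.sqrt ((2 * π) ^ N) = Real.sqrt (2 * π) ^ N from by
    rw [show ((2:ℝ) * π) ^ N = (Real.sqrt (2 * π) ^ N) ^ 2 from by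
      rw [← pow_mul, mul_comm N 2, pow_mul, Real.sq_sqrt (by positivity)],
      Real.sqrt_sq (by positivity)]]
  ring

lemma dot_symm_s5 {N : ℕ} {A : Matrix (Fin N) (Fin N) ℝ} (hA : Aᵀ = A) (x y : Fin N → ℝ) :
    x ⬝ᵥ A *ᵥ y = y ⬝ᵥ A *ᵥ x := by
  rw [dotProduct_mulVec]
  conv_lhs => rw [← hA]
  rw [vecMul_transpose, dotProduct_comm]

lemma quad_expand {N : ℕ} {M : Matrix (Fin N) (Fin N) ℝ} (hM : Mᵀ = M) (x v : Fin N → ℝ) :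
    quadForm M (x - v) = quadForm M x - 2 * (x ⬝ᵥ M *ᵥ v) + quadForm M v := by
  simp only [quadForm, sub_dotProduct, Matrix.mulVec_sub, dotProduct_sub]
  rw [dot_symm_s5 hM v x]
  ring

lemma complete_sq {N : ℕ} {A B : Matrix (Fin N) (Fin N) ℝ} (hA : Aᵀ = A) (hB : Bᵀ = B)
    (a b α : Fin N → ℝ) (hα : (A + B) *ᵥ α = A *ᵥ a + B *ᵥ b) (x : Fin N → ℝ) :
    quadForm A (x - a) + quadForm B (x - b) =
      quadForm (A + B) (x - α) +
        (quadForm A a + quadForm B b - quadForm (A + B) α) := by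
  have hABs : (A + B)ᵀ = A + B := by rw [transpose_add, hA, hB]
  have h1 : ∀ v, quadForm (A + B) v = quadForm A v + quadForm B v := fun v => by
    simp [quadForm, Matrix.add_mulVec, dotProduct_add]
  rw [quad_expand hA, quad_expand hB, quad_expand hABs, hα, dotProduct_add, h1 x]
  ring

lemma inv_order {N : ℕ} {A B : Matrix (Fin N) (Fin N) ℝ} (hA : A.PosDef) (hB : B.PosDef)
    (hAB : (A - B).PosDef) : (B⁻¹ - A⁻¹).PosDef := by
  have hAd : IsUnit A.det := isUnit_iff_ne_zero.2 hA.det_pos.ne'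
  have hBd : IsUnit B.det := isUnit_iff_ne_zero.2 hB.det_pos.ne'
  have hAsym : Aᵀ = A := by
    have := hA.1; rwa [Matrix.IsHermitian, conjTranspose_eq_transpose_of_trivial] at this
  have hBsym : Bᵀ = B := by
    have := hB.1; rwa [Matrix.IsHermitian, conjTranspose_eq_transpose_of_trivial] at this
  refine Matrix.PosDef.of_dotProduct_mulVec_pos ?_ ?_
  · exact (hB.inv.1).sub (hA.inv.1)
  · intro x hx
    set u := A⁻¹ *ᵥ x with hu
    set v := B⁻¹ *ᵥ x with hv
    have hAu : A *ᵥ u = x := by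
      rw [hu, mulVec_mulVec, Matrix.mul_nonsing_inv _ hAd, one_mulVec]
    have hBv : B *ᵥ v = x := by
      rw [hv, mulVec_mulVec, Matrix.mul_nonsing_inv _ hBd, one_mulVec]
    have hune : u ≠ 0 := by
      intro h
      apply hx
      rw [← hAu, h, mulVec_zero]
    have key : x ⬝ᵥ (B⁻¹ - A⁻¹) *ᵥ x
        = u ⬝ᵥ (A - B) *ᵥ u + (v - u) ⬝ᵥ B *ᵥ (v - u) := by
      simp only [Matrix.sub_mulVec, dotProduct_sub, sub_dotProduct, Matrix.mulVec_sub]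
      rw [← hu, ← hv, hAu, hBv]
      rw [dot_symm_s5 hBsym v u, show B *ᵥ v = x from hBv]
      rw [dotProduct_comm x u, dotProduct_comm x v]
      ring
    have h2 : 0 < u ⬝ᵥ (A - B) *ᵥ u := by
      have := hAB.dotProduct_mulVec_pos hune
      simpa using this
    have h3 : 0 ≤ (v - u) ⬝ᵥ B *ᵥ (v - u) := by
      have := hB.posSemidef.dotProduct_mulVec_nonneg (v - u)
      simpa using this
    have := add_pos_of_pos_of_nonneg h2 h3
    rw [← key] at this
    simpa using this

lemma posdef_tsymm {N : ℕ} {M : Matrix (Fin N) (Fin N) ℝ} (h : M.PosDef) : Mᵀ = M := by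
  have := h.1; rwa [Matrix.IsHermitian, conjTranspose_eq_transpose_of_trivial] at this

lemma factor_integral {N : ℕ} {A B : Matrix (Fin N) (Fin N) ℝ} (hA : Aᵀ = A) (hB : Bᵀ = B)
    (hAB : (A + B).PosDef) (a b α : Fin N → ℝ)
    (hα : (A + B) *ᵥ α = A *ᵥ a + B *ᵥ b) :
    ∫ x : Fin N → ℝ, Real.exp (-(quadForm A (x - a) + quadForm B (x - b)) / 2)
      = Real.sqrt ((2 * π) ^ N / (A + B).det) *
        Real.exp (-(quadForm A a + quadForm B b - quadForm (A + B) α) / 2) := by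
  have hpt : ∀ x : Fin N → ℝ,
      Real.exp (-(quadForm A (x - a) + quadForm B (x - b)) / 2)
        = Real.exp (-(quadForm (A + B) (x - α)) / 2) *
          Real.exp (-(quadForm A a + quadForm B b - quadForm (A + B) α) / 2) := by
    intro x
    rw [complete_sq hA hB a b α hα x, ← Real.exp_add]
    congr 1
    ring
  simp_rw [hpt]
  rw [MeasureTheory.integral_mul_const,
    MeasureTheory.integral_sub_right_eq_self
      (fun x => Real.exp (-(quadForm (A + B) x) / 2)) α,
    gauss_posdef hAB]

lemma quad_neg {N : ℕ} (M : Matrix (Fin N) (Fin N) ℝ) (w : Fin N → ℝ) :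
    quadForm M (-w) = quadForm M w := by
  simp [quadForm, Matrix.mulVec_neg]

lemma quad_negM {N : ℕ} (M : Matrix (Fin N) (Fin N) ℝ) (w : Fin N → ℝ) :
    quadForm (-M) w = -quadForm M w := by
  simp [quadForm, Matrix.neg_mulVec]

/-- Closed-form first moment of the approximate likelihood ratio, for independent
Gaussian solver errors δ₁ ~ N(μ₁, S₁), δ₂ ~ N(μ₂, S₂) and observation covariance Sη
with Sη - S₂ strictly positive definite. -/
theorem stmt5 (N : ℕ) (μ₁ μ₂ Δρ₁ Δρ₂ : Fin N → ℝ)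
    (Sη S₁ S₂ : Matrix (Fin N) (Fin N) ℝ)
    (hη : Sη.PosDef) (h1 : S₁.PosDef) (h2 : S₂.PosDef) (hdiff : (Sη - S₂).PosDef) :
    ∀ T₁ T₂ : Matrix (Fin N) (Fin N) ℝ,
      T₁ = (Sη⁻¹ + S₁⁻¹)⁻¹ → T₂ = (S₂⁻¹ - Sη⁻¹)⁻¹ →
    ∀ α₁ α₂ : Fin N → ℝ,
      α₁ = T₁.mulVec (Sη⁻¹.mulVec Δρ₁ + S₁⁻¹.mulVec μ₁) →
      α₂ = T₂.mulVec (S₂⁻¹.mulVec μ₂ - Sη⁻¹.mulVec Δρ₂) →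
    ∀ C₁ C₂ : ℝ,
      C₁ = (quadForm Sη⁻¹ Δρ₁ + quadForm S₁⁻¹ μ₁ - quadForm T₁⁻¹ α₁) / 2 →
      C₂ = (quadForm S₂⁻¹ μ₂ - quadForm Sη⁻¹ Δρ₂ - quadForm T₂⁻¹ α₂) / 2 →
    ∫ z : (Fin N → ℝ) × (Fin N → ℝ),
        Real.exp ((quadForm Sη⁻¹ (Δρ₂ - z.2) - quadForm Sη⁻¹ (Δρ₁ - z.1)) / 2) *
          gaussDensity μ₁ S₁ z.1 * gaussDensity μ₂ S₂ z.2
      = Real.sqrt (T₁.det * T₂.det / (S₁.det * S₂.det)) * Real.exp (-C₁ - C₂) := by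
  intro T₁ T₂ hT₁ hT₂ α₁ α₂ hα₁ hα₂ C₁ C₂ hC₁ hC₂
  have hP1 : (Sη⁻¹ + S₁⁻¹).PosDef := hη.inv.add h1.inv
  have hP2 : (S₂⁻¹ - Sη⁻¹).PosDef := inv_order hη h2 hdiff
  have hT1pos : T₁.PosDef := hT₁ ▸ hP1.inv
  have hT2pos : T₂.PosDef := hT₂ ▸ hP2.inv
  have hP1u : IsUnit (Sη⁻¹ + S₁⁻¹).det := isUnit_iff_ne_zero.2 hP1.det_pos.ne'
  have hP2u : IsUnit (S₂⁻¹ - Sη⁻¹).det := isUnit_iff_ne_zero.2 hP2.det_pos.ne'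
  have hT1inv : T₁⁻¹ = Sη⁻¹ + S₁⁻¹ := by
    rw [hT₁, Matrix.nonsing_inv_nonsing_inv _ hP1u]
  have hT2inv : T₂⁻¹ = S₂⁻¹ - Sη⁻¹ := by
    rw [hT₂, Matrix.nonsing_inv_nonsing_inv _ hP2u]
  -- mulVec equations for α
  have hα₁' : (Sη⁻¹ + S₁⁻¹) *ᵥ α₁ = Sη⁻¹ *ᵥ Δρ₁ + S₁⁻¹ *ᵥ μ₁ := by
    rw [hα₁, mulVec_mulVec, ← hT1inv, Matrix.nonsing_inv_mul _
      (isUnit_iff_ne_zero.2 hT1pos.det_pos.ne'), one_mulVec]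
  have hα₂' : (S₂⁻¹ + -Sη⁻¹) *ᵥ α₂ = S₂⁻¹ *ᵥ μ₂ + (-Sη⁻¹) *ᵥ Δρ₂ := by
    rw [← sub_eq_add_neg, hα₂, mulVec_mulVec, ← hT2inv, Matrix.nonsing_inv_mul _
      (isUnit_iff_ne_zero.2 hT2pos.det_pos.ne'), one_mulVec, Matrix.neg_mulVec,
      ← sub_eq_add_neg]
  set c₁ : ℝ := (Real.sqrt ((2 * π) ^ N * S₁.det))⁻¹ with hc₁
  set c₂ : ℝ := (Real.sqrt ((2 * π) ^ N * S₂.det))⁻¹ with hc₂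
  set F : (Fin N → ℝ) → ℝ := fun x =>
    c₁ * Real.exp (-(quadForm Sη⁻¹ (x - Δρ₁) + quadForm S₁⁻¹ (x - μ₁)) / 2) with hF
  set G : (Fin N → ℝ) → ℝ := fun x =>
    c₂ * Real.exp (-(quadForm S₂⁻¹ (x - μ₂) + quadForm (-Sη⁻¹) (x - Δρ₂)) / 2) with hG
  have hsplit : ∀ z : (Fin N → ℝ) × (Fin N → ℝ),
      Real.exp ((quadForm Sη⁻¹ (Δρ₂ - z.2) - quadForm Sη⁻¹ (Δρ₁ - z.1)) / 2) *
        gaussDensity μ₁ S₁ z.1 * gaussDensity μ₂ S₂ z.2 = F z.1 * G z.2 := by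
    intro z
    simp only [hF, hG, gaussDensity, ← hc₁, ← hc₂]
    rw [← neg_sub z.1 Δρ₁, ← neg_sub z.2 Δρ₂, quad_neg, quad_neg, quad_negM]
    rw [show (quadForm Sη⁻¹ (z.2 - Δρ₂) - quadForm Sη⁻¹ (z.1 - Δρ₁)) / 2
        = -(quadForm Sη⁻¹ (z.1 - Δρ₁)) / 2 + quadForm Sη⁻¹ (z.2 - Δρ₂) / 2 from by ring,
      Real.exp_add]
    rw [show -(quadForm Sη⁻¹ (z.1 - Δρ₁) + quadForm S₁⁻¹ (z.1 - μ₁)) / 2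
        = -(quadForm Sη⁻¹ (z.1 - Δρ₁)) / 2 + -(quadForm S₁⁻¹ (z.1 - μ₁)) / 2 from by ring,
      Real.exp_add]
    rw [show -(quadForm S₂⁻¹ (z.2 - μ₂) + -quadForm Sη⁻¹ (z.2 - Δρ₂)) / 2
        = quadForm Sη⁻¹ (z.2 - Δρ₂) / 2 + -(quadForm S₂⁻¹ (z.2 - μ₂)) / 2 from by ring,
      Real.exp_add]
    ring
  simp_rw [hsplit]
  rw [MeasureTheory.Measure.volume_eq_prod, MeasureTheory.integral_prod_mul F G]
  have hIF : ∫ x, F x = c₁ * (Real.sqrt ((2 * π) ^ N / (Sη⁻¹ + S₁⁻¹).det) *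
      Real.exp (-C₁)) := by
    rw [hF]
    rw [MeasureTheory.integral_const_mul]
    rw [factor_integral (posdef_tsymm hη.inv) (posdef_tsymm h1.inv) hP1 Δρ₁ μ₁ α₁ hα₁']
    congr 2
    rw [hC₁, hT1inv]
    ring
  have hIG : ∫ x, G x = c₂ * (Real.sqrt ((2 * π) ^ N / (S₂⁻¹ - Sη⁻¹).det) *
      Real.exp (-C₂)) := by
    have hnegsym : (-Sη⁻¹)ᵀ = -Sη⁻¹ := by rw [transpose_neg, posdef_tsymm hη.inv]
    have hP2' : (S₂⁻¹ + -Sη⁻¹).PosDef := by rwa [← sub_eq_add_neg]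
    rw [hG]
    rw [MeasureTheory.integral_const_mul]
    rw [factor_integral (posdef_tsymm h2.inv) hnegsym hP2' μ₂ Δρ₂ α₂ hα₂']
    rw [← sub_eq_add_neg]
    congr 2
    rw [hC₂, hT2inv, quad_negM]
    ring
  rw [hIF, hIG]
  -- now pure arithmetic
  have hπ : (0:ℝ) < (2 * π) ^ N := by positivity
  have hd1 : (Sη⁻¹ + S₁⁻¹).det = T₁.det⁻¹ := by
    rw [← hT1inv, Matrix.det_nonsing_inv, Ring.inverse_eq_inv']
  have hd2 : (S₂⁻¹ - Sη⁻¹).det = T₂.det⁻¹ := by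
    rw [← hT2inv, Matrix.det_nonsing_inv, Ring.inverse_eq_inv']
  rw [hd1, hd2]
  have hS1 : (0:ℝ) < S₁.det := h1.det_pos
  have hS2 : (0:ℝ) < S₂.det := h2.det_pos
  have hTd1 : (0:ℝ) < T₁.det := hT1pos.det_pos
  have hTd2 : (0:ℝ) < T₂.det := hT2pos.det_pos
  have e₁ : c₁ * Real.sqrt ((2 * π) ^ N / T₁.det⁻¹) = Real.sqrt (T₁.det / S₁.det) := by
    rw [hc₁, show (2 * π) ^ N / T₁.det⁻¹ = (2 * π) ^ N * T₁.det from by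
        field_simp,
      ← Real.sqrt_inv, ← Real.sqrt_mul (by positivity)]
    congr 1
    field_simp
  have e₂ : c₂ * Real.sqrt ((2 * π) ^ N / T₂.det⁻¹) = Real.sqrt (T₂.det / S₂.det) := by
    rw [hc₂, show (2 * π) ^ N / T₂.det⁻¹ = (2 * π) ^ N * T₂.det from by
        field_simp,
      ← Real.sqrt_inv, ← Real.sqrt_mul (by positivity)]
    congr 1
    field_simp
  calc c₁ * (Real.sqrt ((2 * π) ^ N / T₁.det⁻¹) * Real.exp (-C₁)) *
        (c₂ * (Real.sqrt ((2 * π) ^ N / T₂.det⁻¹) * Real.exp (-C₂)))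
      = (c₁ * Real.sqrt ((2 * π) ^ N / T₁.det⁻¹)) *
        (c₂ * Real.sqrt ((2 * π) ^ N / T₂.det⁻¹)) *
        (Real.exp (-C₁) * Real.exp (-C₂)) := by ring
    _ = Real.sqrt (T₁.det / S₁.det) * Real.sqrt (T₂.det / S₂.det) * Real.exp (-C₁ - C₂) := by
        rw [e₁, e₂, ← Real.exp_add]; ring_nf
    _ = Real.sqrt (T₁.det * T₂.det / (S₁.det * S₂.det)) * Real.exp (-C₁ - C₂) := by
        rw [← Real.sqrt_mul (div_pos hTd1 hS1).le, div_mul_div_comm]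
end

section
/- Let A be a symmetric N×N real matrix with a nontrivial kernel and let γ ∈ ℝ^N have a nonzero component γ₀ in ker(A). Then ∫_{ℝ^N} exp(-(1/2)xᵀA x + γᵀx) dx = +∞. -/
open MeasureTheory Real Matrix ENNReal

/-- If the symmetric matrix `A` has a nontrivial kernel and the linear term `γ` has a
nonzero component `γ₀` in the kernel of `A` (its remaining component lying in the range
of `A`), then the Gaussian-type integral diverges. -/
theorem stmt8 (N : ℕ) (A : Matrix (Fin N) (Fin N) ℝ) (hA : A.IsSymm)
    (γ γ₀ : Fin N → ℝ) (hker : A.mulVec γ₀ = 0) (hne : γ₀ ≠ 0)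
    (hdecomp : ∃ y : Fin N → ℝ, γ = γ₀ + A.mulVec y) :
    ∫⁻ x : Fin N → ℝ, ENNReal.ofReal (Real.exp (-(quadForm A x) / 2 + γ ⬝ᵥ x)) = ⊤ := by
  obtain ⟨y, hy⟩ := hdecomp
  set c : ℝ := γ₀ ⬝ᵥ γ₀ with hc
  have hγ₀A : ∀ x : Fin N → ℝ, γ₀ ⬝ᵥ A.mulVec x = 0 := by
    intro x
    rw [Matrix.dotProduct_mulVec, ← Matrix.mulVec_transpose, hA.eq, hker,
      zero_dotProduct]
  -- key: shift identity
  have key : ∀ x : Fin N → ℝ,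
      -(quadForm A (x + γ₀)) / 2 + γ ⬝ᵥ (x + γ₀)
        = (-(quadForm A x) / 2 + γ ⬝ᵥ x) + c := by
    intro x
    have h1 : quadForm A (x + γ₀) = quadForm A x := by
      simp only [quadForm, Matrix.mulVec_add, dotProduct_add,
        add_dotProduct, hker, dotProduct_zero, hγ₀A]
      ring
    have h2 : γ ⬝ᵥ γ₀ = c := by
      rw [hy, add_dotProduct, hc]
      have : A.mulVec y ⬝ᵥ γ₀ = 0 := by
        rw [dotProduct_comm, hγ₀A]
      rw [this, add_zero]
    rw [h1, dotProduct_add, h2]; ring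
  have hcpos : 0 < c := by
    have hnn : 0 ≤ c := by
      rw [hc]; exact Finset.sum_nonneg fun i _ => mul_self_nonneg _
    rcases lt_or_eq_of_le hnn with h | h
    · exact h
    · exact absurd (dotProduct_self_eq_zero.mp h.symm) hne
  set g : (Fin N → ℝ) → ℝ≥0∞ :=
    fun x => ENNReal.ofReal (Real.exp (-(quadForm A x) / 2 + γ ⬝ᵥ x)) with hg
  set I := ∫⁻ x, g x with hI
  have hshift : ∫⁻ x, g (x + γ₀) = I := lintegral_add_right_eq_self g γ₀
  have hmul : ∀ x, g (x + γ₀) = ENNReal.ofReal (Real.exp c) * g x := by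
    intro x
    show ENNReal.ofReal _ = _ * ENNReal.ofReal _
    rw [key x, Real.exp_add, ENNReal.ofReal_mul (Real.exp_nonneg _), mul_comm]
  have hIeq : ENNReal.ofReal (Real.exp c) * I = I := by
    calc ENNReal.ofReal (Real.exp c) * I
        = ∫⁻ x, ENNReal.ofReal (Real.exp c) * g x :=
          (lintegral_const_mul' _ _ ENNReal.ofReal_ne_top).symm
      _ = ∫⁻ x, g (x + γ₀) := by simp only [hmul]
      _ = I := hshift
  -- g is positive everywhere, so I > 0
  have hmeas : Measurable g := by
    apply Measurable.ennreal_ofReal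
    refine Real.measurable_exp.comp ?_
    apply Measurable.add
    · apply Measurable.div_const
      apply Measurable.neg
      unfold quadForm dotProduct Matrix.mulVec
      exact Finset.measurable_sum _ fun i _ =>
        ((measurable_pi_apply i).mul (Finset.measurable_sum _ fun j _ =>
          (measurable_pi_apply j).const_mul _))
    · unfold dotProduct
      exact Finset.measurable_sum _ fun i _ => (measurable_pi_apply i).const_mul _
  have hIne : I ≠ 0 := by
    intro h0
    have hae := (lintegral_eq_zero_iff hmeas).mp h0
    have : (volume : Measure (Fin N → ℝ)) {x | g x ≠ 0} = 0 := by
      simpa [Filter.EventuallyEq, ae_iff] using hae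
    have huniv : {x : Fin N → ℝ | g x ≠ 0} = Set.univ := by
      ext x; simp [hg, ENNReal.ofReal_eq_zero, not_le, Real.exp_pos]
    rw [huniv] at this
    exact (MeasureTheory.Measure.measure_univ_ne_zero).mpr (NeZero.ne _) this
  by_contra hItop
  have hIlt : I < ⊤ := lt_top_iff_ne_top.mpr hItop
  have hone : (1 : ℝ≥0∞) < ENNReal.ofReal (Real.exp c) := by
    rw [← ENNReal.ofReal_one]
    refine ENNReal.ofReal_lt_ofReal_iff_of_nonneg zero_le_one |>.mpr ?_
    rw [← Real.exp_zero]
    exact Real.exp_lt_exp.mpr hcpos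
  have : I < ENNReal.ofReal (Real.exp c) * I := by
    calc I = 1 * I := (one_mul I).symm
    _ < ENNReal.ofReal (Real.exp c) * I :=
        by rw [mul_comm 1 I, mul_comm _ I]; exact ENNReal.mul_lt_mul_right hIne hItop hone
  exact absurd hIeq.symm (ne_of_lt this)
end
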